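/- Let A = K be a field of characteristic zero and F = K[T₁,…,T_r]. For n > 0, the K-algebra Γⁿ_K(F) (with its internal multiplication) is generated by the elements γ¹(m) * γ^{n-1}(1) where m ranges over monomials of total degree at most n. -/

import Mathlib

open scoped TensorProduct
open PiTensorProduct

/-- The power sum `P(m) = m ⊗ 1 ⊗ ⋯ ⊗ 1 + ⋯ + 1 ⊗ ⋯ ⊗ 1 ⊗ m ∈ Tⁿ_K F`, the image of
`γ¹(m) * γ^{n-1}(1)` under the isomorphism `αₙ : Γⁿ_K(F) ≅ TSⁿ_K(F)` (which is an
isomorphism since `K` has characteristic zero). -/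
noncomputable def powerSum (K : Type*) {F : Type*} [CommRing K] [CommRing F] [Algebra K F]
    (n : ℕ) (m : F) : ⨂[K] (_ : Fin n), F :=
  ∑ j : Fin n, PiTensorProduct.tprod K (fun k => if k = j then m else 1)

section Aux

variable (K : Type*) [Field K] {R : Type*} [CommRing R] [Algebra K R] {n : ℕ}

lemma powerSum_eq (m : R) :
    powerSum K n m = ∑ j : Fin n, tprod K (Function.update (1 : Fin n → R) j m) := by
  refine Finset.sum_congr rfl fun j _ => ?_
  congr 1
  funext k
  simp [Function.update_apply]

lemma powerSum_add (x y : R) : powerSum K n (x + y) = powerSum K n x + powerSum K n y := by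
  simp only [powerSum_eq, ← Finset.sum_add_distrib]
  refine Finset.sum_congr rfl fun j _ => ?_
  exact (tprod K : MultilinearMap K (fun _ : Fin n => R) _).map_update_add _ j x y

lemma powerSum_smul (c : K) (x : R) : powerSum K n (c • x) = c • powerSum K n x := by
  simp only [powerSum_eq, Finset.smul_sum]
  refine Finset.sum_congr rfl fun j _ => ?_
  exact (tprod K : MultilinearMap K (fun _ : Fin n => R) _).map_update_smul _ j c x

noncomputable def esum (n k : ℕ) (a : Fin k → R) : ⨂[K] (_ : Fin n), R :=
  ∑ g ∈ Finset.univ.filter (fun g : Fin k → Fin n => Function.Injective g),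
    tprod K (fun j => ∏ i, if g i = j then a i else 1)

lemma esum_zero (a : Fin 0 → R) : esum K n 0 a = 1 := by
  rw [esum, Finset.filter_true_of_mem (fun g _ => Function.injective_of_subsingleton g),
    Finset.univ_unique, Finset.sum_singleton, PiTensorProduct.one_def]
  congr 1

lemma esum_eq_zero (a : Fin (n + 1) → R) : esum K n (n + 1) a = 0 := by
  rw [esum, Finset.sum_eq_zero]
  intro g hg
  simp only [Finset.mem_filter] at hg
  have := Fintype.card_le_of_injective g hg.2
  simp at this

lemma powerSum_mul_esum (k : ℕ) (a : Fin (k + 1) → R) :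
    powerSum K n (a 0) * esum K n k (fun i => a i.succ) =
      esum K n (k + 1) a +
        ∑ i : Fin k, esum K n k (Function.update (fun i' => a i'.succ) i (a 0 * a i.succ)) := by
  classical
  set I : Finset (Fin k → Fin n) := Finset.univ.filter (fun g => Function.Injective g) with hI
  set T : Fin n → (Fin k → Fin n) → (⨂[K] (_ : Fin n), R) := fun j g =>
    tprod K (fun j' => (if j' = j then a 0 else 1) * ∏ i, if g i = j' then a i.succ else 1)
    with hT
  have step1 : powerSum K n (a 0) * esum K n k (fun i => a i.succ) = ∑ g ∈ I, ∑ j : Fin n, T j g := by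
    rw [powerSum, esum, Finset.sum_mul_sum, Finset.sum_comm]
    refine Finset.sum_congr rfl fun g _ => Finset.sum_congr rfl fun j _ => ?_
    rw [tprod_mul_tprod]
    rfl
  have step2 : ∀ g ∈ I, (∑ j : Fin n, T j g) =
      (∑ j ∈ Finset.univ \ Finset.univ.image g, T j g) + ∑ i : Fin k, T (g i) g := by
    intro g hg
    have hinj : Function.Injective g := (Finset.mem_filter.mp hg).2
    rw [← Finset.sum_image (g := g) (f := fun j => T j g) (fun x _ y _ h => hinj h),
      ← Finset.sum_sdiff (Finset.subset_univ (Finset.univ.image g))]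
  -- cons part
  have step3 : (∑ g ∈ I, ∑ j ∈ Finset.univ \ Finset.univ.image g, T j g) = esum K n (k + 1) a := by
    rw [esum, Finset.sum_sigma']
    refine Finset.sum_bij' (fun x _ => Fin.cons x.2 x.1) (fun g' _ => ⟨Fin.tail g', g' 0⟩)
      ?_ ?_ ?_ ?_ ?_
    · rintro ⟨g, j⟩ hx
      simp only [hI, Finset.mem_sigma, Finset.mem_sdiff, Finset.mem_filter, Finset.mem_univ,
        true_and, Finset.mem_image, not_exists] at hx
      simp only [hI, Finset.mem_filter, Finset.mem_univ, true_and]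
      refine Fin.cons_injective_iff.mpr ⟨?_, hx.1⟩
      rintro ⟨i, hi⟩
      exact hx.2 i hi
    · intro g' hg'
      simp only [Finset.mem_filter, Finset.mem_univ, true_and] at hg'
      simp only [hI, Finset.mem_sigma, Finset.mem_sdiff, Finset.mem_filter, Finset.mem_univ,
        true_and, Finset.mem_image, not_exists]
      constructor
      · intro x y h
        exact Fin.succ_injective _ (hg' h)
      · intro i h
        exact (Fin.succ_ne_zero i) (hg' h)
    · rintro ⟨g, j⟩ _
      ext i
      · rfl
      · simp [Fin.tail]
    · intro g' _
      exact Fin.cons_self_tail g'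
    · rintro ⟨g, j⟩ _
      simp only [hT]
      congr 1
      funext j'
      rw [Fin.prod_univ_succ]
      simp only [Fin.cons_zero, Fin.cons_succ]
      congr 1
      simp [eq_comm]
  have step4 : ∀ i : Fin k, (∑ g ∈ I, T (g i) g) =
      esum K n k (Function.update (fun i' => a i'.succ) i (a 0 * a i.succ)) := by
    intro i₀
    rw [esum]
    refine Finset.sum_congr rfl fun g hg => ?_
    have hinj : Function.Injective g := (Finset.mem_filter.mp hg).2
    simp only [hT]
    congr 1
    funext j'
    rw [← Finset.mul_prod_erase _ _ (Finset.mem_univ i₀),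
      ← Finset.mul_prod_erase _ (fun i => if g i = j' then Function.update (fun i' => a i'.succ) i₀ (a 0 * a i₀.succ) i else 1) (Finset.mem_univ i₀), ← mul_assoc]
    have herase : ∀ i ∈ Finset.univ.erase i₀,
        (if g i = j' then a i.succ else 1) =
          (if g i = j' then Function.update (fun i' => a i'.succ) i₀ (a 0 * a i₀.succ) i else 1) := by
      intro i hi
      rw [Function.update_of_ne (Finset.mem_erase.mp hi).1]
    rw [Finset.prod_congr rfl herase]
    congr 1
    rw [Function.update_self]
    by_cases h : g i₀ = j'
    · simp [h]
    · have h' : ¬ j' = g i₀ := fun hh => h hh.symm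
      simp [h, h']
  calc powerSum K n (a 0) * esum K n k (fun i => a i.succ)
      = ∑ g ∈ I, ((∑ j ∈ Finset.univ \ Finset.univ.image g, T j g) + ∑ i : Fin k, T (g i) g) := by
        rw [step1]; exact Finset.sum_congr rfl step2
    _ = (∑ g ∈ I, ∑ j ∈ Finset.univ \ Finset.univ.image g, T j g)
          + ∑ i : Fin k, ∑ g ∈ I, T (g i) g := by
        rw [Finset.sum_add_distrib, Finset.sum_comm]
    _ = _ := by rw [step3]; congr 1; exact Finset.sum_congr rfl fun i _ => step4 i

lemma esum_one (a : Fin 1 → R) : esum K n 1 a = powerSum K n (a 0) := by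
  classical
  rw [esum, Finset.filter_true_of_mem (fun g _ => Function.injective_of_subsingleton g),
    powerSum]
  rw [← Equiv.sum_comp (Equiv.funUnique (Fin 1) (Fin n)).symm]
  refine Finset.sum_congr rfl fun j _ => ?_
  congr 1
  funext j'
  rw [Fin.prod_univ_one]
  simp only [Equiv.funUnique_symm_apply]
  simp [eq_comm]
  congr 1

/-- transfer of subset products along `Fin.succ` -/
lemma prod_tail_eq {k : ℕ} (a : Fin (k + 1) → R) (S : Finset (Fin k)) :
    ∃ S' : Finset (Fin (k + 1)), S' ≠ Finset.univ ∧ ∏ i ∈ S, a i.succ = ∏ i ∈ S', a i := by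
  classical
  refine ⟨S.map ⟨Fin.succ, Fin.succ_injective _⟩, ?_, by simp [Finset.prod_map]⟩
  intro h
  have h0 : (0 : Fin (k + 1)) ∈ S.map ⟨Fin.succ, Fin.succ_injective _⟩ := h ▸ Finset.mem_univ _
  rw [Finset.mem_map] at h0
  obtain ⟨i, _, hi⟩ := h0
  exact Fin.succ_ne_zero i hi

lemma prod_update_eq {k : ℕ} (a : Fin (k + 1) → R) (i₀ : Fin k) (S : Finset (Fin k)) :
    ∃ S' : Finset (Fin (k + 1)), (S ≠ Finset.univ → S' ≠ Finset.univ) ∧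
      ∏ i ∈ S, Function.update (fun i' => a i'.succ) i₀ (a 0 * a i₀.succ) i = ∏ i ∈ S', a i := by
  classical
  by_cases hmem : i₀ ∈ S
  · refine ⟨insert 0 (S.map ⟨Fin.succ, Fin.succ_injective _⟩), ?_, ?_⟩
    · intro hS h
      rw [Ne, Finset.eq_univ_iff_forall] at hS
      push_neg at hS
      obtain ⟨i₁, hi₁⟩ := hS
      have : i₁.succ ∈ insert (0 : Fin (k+1)) (S.map ⟨Fin.succ, Fin.succ_injective _⟩) :=
        h ▸ Finset.mem_univ _
      rcases Finset.mem_insert.mp this with h' | h'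
      · exact Fin.succ_ne_zero i₁ h'
      · obtain ⟨i₂, hi₂, he⟩ := Finset.mem_map.mp h'
        exact hi₁ (Fin.succ_injective _ he ▸ hi₂)
    · have h0 : (0 : Fin (k+1)) ∉ S.map ⟨Fin.succ, Fin.succ_injective _⟩ := by
        simp only [Finset.mem_map, not_exists]
        intro i hi
        exact Fin.succ_ne_zero i hi.2
      rw [Finset.prod_insert h0]
      rw [← Finset.mul_prod_erase _ _ hmem, Function.update_self]
      have herase : ∀ i ∈ S.erase i₀,
          Function.update (fun i' => a i'.succ) i₀ (a 0 * a i₀.succ) i = a i.succ := by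
        intro i hi
        exact Function.update_of_ne (Finset.mem_erase.mp hi).1 _ _
      rw [Finset.prod_congr rfl herase]
      simp only [Finset.prod_map, Function.Embedding.coeFn_mk]
      rw [← Finset.mul_prod_erase _ (fun i => a i.succ) hmem]
      ring
  · refine ⟨S.map ⟨Fin.succ, Fin.succ_injective _⟩, fun _ h => ?_, ?_⟩
    · have h0 : (0 : Fin (k + 1)) ∈ S.map ⟨Fin.succ, Fin.succ_injective _⟩ := h ▸ Finset.mem_univ _
      obtain ⟨i, _, hi⟩ := Finset.mem_map.mp h0
      exact Fin.succ_ne_zero i hi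
    · have hcong : ∀ i ∈ S,
          Function.update (fun i' => a i'.succ) i₀ (a 0 * a i₀.succ) i = a i.succ := by
        intro i hi
        refine Function.update_of_ne (fun he => hmem ?_) _ _
        rw [← he]; exact hi
      rw [Finset.prod_congr rfl hcong]
      simp [Finset.prod_map]

lemma esum_mem (k : ℕ) (a : Fin k → R) :
    esum K n k a ∈
      Algebra.adjoin K {t | ∃ S : Finset (Fin k), t = powerSum K n (∏ i ∈ S, a i)} := by
  induction k with
  | zero => rw [esum_zero]; exact one_mem _
  | succ k ih =>
    have hrec : esum K n (k + 1) a = powerSum K n (a 0) * esum K n k (fun i => a i.succ)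
        - ∑ i : Fin k, esum K n k (Function.update (fun i' => a i'.succ) i (a 0 * a i.succ)) := by
      rw [powerSum_mul_esum]; ring
    rw [hrec]
    refine sub_mem (mul_mem ?_ ?_) (sum_mem fun i _ => ?_)
    · exact Algebra.subset_adjoin ⟨{0}, by rw [Finset.prod_singleton]⟩
    · refine Algebra.adjoin_le ?_ (ih (fun i => a i.succ))
      rintro t ⟨S, rfl⟩
      obtain ⟨S', -, hp⟩ := prod_tail_eq a S
      rw [hp]
      exact Algebra.subset_adjoin ⟨S', rfl⟩
    · refine Algebra.adjoin_le ?_ (ih _)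
      rintro t ⟨S, rfl⟩
      obtain ⟨S', -, hp⟩ := prod_update_eq a i S
      rw [hp]
      exact Algebra.subset_adjoin ⟨S', rfl⟩

lemma esum_lead (k : ℕ) (a : Fin (k + 1) → R) :
    esum K n (k + 1) a - ((-1 : ℤ) ^ k * (Nat.factorial k : ℤ)) • powerSum K n (∏ i, a i) ∈
      Algebra.adjoin K
        {t | ∃ S : Finset (Fin (k + 1)), S ≠ Finset.univ ∧ t = powerSum K n (∏ i ∈ S, a i)} := by
  induction k with
  | zero =>
    rw [esum_one, Fin.prod_univ_one]
    norm_num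
  | succ k ih =>
    set A := Algebra.adjoin K
        {t | ∃ S : Finset (Fin (k + 2)), S ≠ Finset.univ ∧ t = powerSum K n (∏ i ∈ S, a i)}
      with hA
    have hsingle : ({0} : Finset (Fin (k + 2))) ≠ Finset.univ := by
      intro h
      have h1 := Finset.eq_univ_iff_forall.mp h 1
      simp [Fin.ext_iff] at h1
    have hterm1 : powerSum K n (a 0) * esum K n (k + 1) (fun i => a i.succ) ∈ A := by
      refine mul_mem (Algebra.subset_adjoin ⟨{0}, hsingle, by rw [Finset.prod_singleton]⟩) ?_
      refine Algebra.adjoin_le ?_ (esum_mem K (k + 1) (fun i => a i.succ))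
      rintro t ⟨S, rfl⟩
      obtain ⟨S', hS', hp⟩ := prod_tail_eq a S
      rw [hp]
      exact Algebra.subset_adjoin ⟨S', hS', rfl⟩
    set b : Fin (k + 1) → (Fin (k + 1) → R) := fun i =>
      Function.update (fun i' => a i'.succ) i (a 0 * a i.succ) with hb
    have hprod : ∀ i : Fin (k + 1), (∏ i', b i i') = ∏ i', a i' := by
      intro i₀
      rw [← Finset.mul_prod_erase _ _ (Finset.mem_univ i₀), hb]
      simp only [Function.update_self]
      rw [Finset.prod_congr rfl
        (fun i hi => Function.update_of_ne (Finset.mem_erase.mp hi).1 _ _)]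
      rw [mul_assoc, Finset.mul_prod_erase _ (fun i => a i.succ) (Finset.mem_univ i₀)]
      exact (Fin.prod_univ_succ a).symm
    have hrec : esum K n (k + 2) a = powerSum K n (a 0) * esum K n (k + 1) (fun i => a i.succ)
        - ∑ i : Fin (k + 1), esum K n (k + 1) (b i) := by
      rw [powerSum_mul_esum, hb]; ring
    set c : ℤ := (-1 : ℤ) ^ k * (Nat.factorial k : ℤ) with hc
    have hbmem : ∀ i, esum K n (k + 1) (b i) - c • powerSum K n (∏ i', a i') ∈ A := by
      intro i
      have h := ih (b i)
      rw [hprod i] at h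
      refine Algebra.adjoin_le ?_ h
      rintro t ⟨S, hSne, rfl⟩
      obtain ⟨S', hS', hp⟩ := prod_update_eq a i S
      rw [hb, hp]
      exact Algebra.subset_adjoin ⟨S', hS' hSne, rfl⟩
    have hcoeff : ((k + 1 : ℕ) : ℤ) * c = -((-1 : ℤ) ^ (k + 1) * ((k + 1).factorial : ℤ)) := by
      rw [hc]
      push_cast [Nat.factorial_succ]
      ring
    have key : esum K n (k + 2) a
          - ((-1 : ℤ) ^ (k + 1) * ((k + 1).factorial : ℤ)) • powerSum K n (∏ i, a i)
        = powerSum K n (a 0) * esum K n (k + 1) (fun i => a i.succ)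
          - ∑ i : Fin (k + 1), (esum K n (k + 1) (b i) - c • powerSum K n (∏ i', a i')) := by
      rw [hrec, Finset.sum_sub_distrib, Finset.sum_const, Finset.card_univ, Fintype.card_fin,
        ← natCast_zsmul, smul_smul, hcoeff, neg_smul]
      abel
    rw [key]
    exact sub_mem hterm1 (sum_mem fun i _ => hbmem i)

lemma powerSum_prod_mem [CharZero K] (a : Fin (n + 1) → R) :
    powerSum K n (∏ i, a i) ∈ Algebra.adjoin K
      {t | ∃ S : Finset (Fin (n + 1)), S ≠ Finset.univ ∧ t = powerSum K n (∏ i ∈ S, a i)} := by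
  have h := esum_lead K (n := n) n a
  rw [esum_eq_zero, zero_sub] at h
  have h' := neg_mem h
  rw [neg_neg] at h'
  have hcast : ((-1 : ℤ) ^ n * (Nat.factorial n : ℤ)) • powerSum K n (∏ i, a i)
      = (((-1 : K) ^ n * (Nat.factorial n : K))) • powerSum K n (∏ i, a i) := by
    rw [← Int.cast_smul_eq_zsmul K]
    push_cast
    ring_nf
  rw [hcast] at h'
  have hne : ((-1 : K) ^ n * (Nat.factorial n : K)) ≠ 0 := by
    refine mul_ne_zero (pow_ne_zero _ (by norm_num)) ?_
    exact_mod_cast Nat.cast_ne_zero.mpr (Nat.factorial_ne_zero n)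
  have hfin := Subalgebra.smul_mem _ h' (((-1 : K) ^ n * (Nat.factorial n : K)))⁻¹
  rwa [smul_smul, inv_mul_cancel₀ hne, one_smul] at hfin

lemma reindex_mul (σ : Equiv.Perm (Fin n)) (x y : ⨂[K] (_ : Fin n), R) :
    PiTensorProduct.reindex K (fun _ : Fin n => R) σ (x * y) =
      PiTensorProduct.reindex K (fun _ : Fin n => R) σ x *
        PiTensorProduct.reindex K (fun _ : Fin n => R) σ y := by
  induction x using PiTensorProduct.induction_on with
  | smul_tprod cx fx =>
    induction y using PiTensorProduct.induction_on with
    | smul_tprod cy fy =>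
      simp only [smul_mul_assoc, mul_smul_comm, tprod_mul_tprod, map_smul, reindex_tprod]
      rfl
    | add y1 y2 h1 h2 =>
      rw [mul_add, map_add, h1, h2, map_add, mul_add]
  | add x1 x2 h1 h2 =>
    rw [add_mul, map_add, h1, h2, map_add, add_mul]

/-- The subalgebra of symmetric tensors. -/
noncomputable def symmAlg : Subalgebra K (⨂[K] (_ : Fin n), R) where
  carrier := {z | ∀ σ : Equiv.Perm (Fin n),
    PiTensorProduct.reindex K (fun _ : Fin n => R) σ z = z}
  mul_mem' := by
    intro x y hx hy σ
    rw [reindex_mul, hx σ, hy σ]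
  add_mem' := by
    intro x y hx hy σ
    rw [map_add, hx σ, hy σ]
  algebraMap_mem' := by
    intro c σ
    rw [Algebra.algebraMap_eq_smul_one, map_smul, PiTensorProduct.one_def, reindex_tprod]
    rfl

lemma powerSum_mem_symmAlg (m : R) : powerSum K n m ∈ symmAlg K (R := R) (n := n) := by
  intro σ
  rw [powerSum, map_sum]
  have h : ∀ j : Fin n,
      PiTensorProduct.reindex K (fun _ : Fin n => R) σ
        (tprod K (fun k => if k = j then m else 1)) =
      tprod K (fun k => if k = σ j then m else 1) := by
    intro j
    rw [reindex_tprod]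
    congr 1
    funext i
    simp only [Equiv.symm_apply_eq]
  rw [Finset.sum_congr rfl fun j _ => h j]
  exact Equiv.sum_comp σ (fun j => tprod K (fun k => if k = j then m else 1))

lemma esum_univ (f : Fin n → R) :
    esum K n n f = ∑ σ : Equiv.Perm (Fin n), tprod K (fun i => f (σ.symm i)) := by
  classical
  rw [esum]
  refine Finset.sum_bij' (fun g hg => Equiv.ofBijective g
      ((Finite.injective_iff_bijective).mp (Finset.mem_filter.mp hg).2))
    (fun σ _ => ⇑σ) ?_ ?_ ?_ ?_ ?_
  · intro g hg; exact Finset.mem_univ _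
  · intro σ _
    exact Finset.mem_filter.mpr ⟨Finset.mem_univ _, σ.injective⟩
  · intro g hg
    rfl
  · intro σ _
    exact Equiv.coe_fn_injective rfl
  · intro g hg
    congr 1
    funext j
    set σ := Equiv.ofBijective g ((Finite.injective_iff_bijective).mp (Finset.mem_filter.mp hg).2)
      with hσ
    have hg' : ∀ i, g i = σ i := fun i => rfl
    rw [Finset.prod_eq_single (σ.symm j)]
    · rw [hg', Equiv.apply_symm_apply, if_pos rfl]
    · intro i _ hne
      rw [hg', if_neg]
      intro hcontra
      exact hne (by rw [← hcontra, Equiv.symm_apply_apply])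
    · intro hcontra
      exact absurd (Finset.mem_univ _) hcontra

end Aux


section Poly

variable (K : Type*) [Field K] {n r : ℕ}

lemma monomial_prod {ι : Type*} (S : Finset ι) (e : ι → (Fin r →₀ ℕ)) :
    ∏ i ∈ S, MvPolynomial.monomial (e i) (1 : K) = MvPolynomial.monomial (∑ i ∈ S, e i) 1 := by
  classical
  induction S using Finset.induction_on with
  | empty => simp
  | insert _ _ h ih =>
    rw [Finset.prod_insert h, Finset.sum_insert h, ih, MvPolynomial.monomial_mul, one_mul]

lemma exists_decomp (k : ℕ) : ∀ d : Fin r →₀ ℕ, k + 1 ≤ d.sum (fun _ e => e) →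
    ∃ e : Fin (k + 1) → (Fin r →₀ ℕ),
      (∀ i, 1 ≤ (e i).sum (fun _ x => x)) ∧ ∑ i, e i = d := by
  induction k with
  | zero =>
    intro d hd
    exact ⟨fun _ => d, fun _ => hd, by rw [Fin.sum_univ_one]⟩
  | succ k ih =>
    intro d hd
    have hne : ∃ j, d j ≠ 0 := by
      by_contra h
      push_neg at h
      have hd0 : d = 0 := Finsupp.ext h
      rw [hd0] at hd
      simp at hd
    obtain ⟨j, hj⟩ := hne
    set d' : Fin r →₀ ℕ := d - Finsupp.single j 1 with hd'
    have hadd : Finsupp.single j 1 + d' = d := by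
      ext a
      rw [Finsupp.add_apply, hd', Finsupp.tsub_apply]
      by_cases ha : a = j
      · subst ha
        rw [Finsupp.single_eq_same]
        have := Nat.one_le_iff_ne_zero.mpr hj
        omega
      · rw [Finsupp.single_eq_of_ne' (fun h => ha h.symm)]
        omega
    have hsum : 1 + d'.sum (fun _ x => x) = d.sum (fun _ x => x) := by
      conv_rhs => rw [← hadd]
      rw [Finsupp.sum_add_index' (fun _ => rfl) (fun _ _ _ => rfl)]
      rw [Finsupp.sum_single_index rfl]
    obtain ⟨e', he'1, he'2⟩ := ih d' (by omega)
    refine ⟨Fin.cons (Finsupp.single j 1) e', ?_, ?_⟩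
    · intro i
      refine Fin.cases ?_ ?_ i
      · rw [Fin.cons_zero, Finsupp.sum_single_index rfl]
      · intro i'
        rw [Fin.cons_succ]
        exact he'1 i'
    · rw [Fin.sum_univ_succ]
      simp only [Fin.cons_zero, Fin.cons_succ]
      rw [he'2, hadd]

lemma sum_sum_eq {m : ℕ} (S : Finset (Fin m)) (e : Fin m → (Fin r →₀ ℕ)) :
    ((∑ i ∈ S, e i).sum fun _ x => x) = ∑ i ∈ S, ((e i).sum fun _ x => x) :=
  (Finsupp.sum_finset_sum_index (h := fun _ x => x) (fun _ => rfl) (fun _ _ _ => rfl)).symm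

variable [CharZero K]

lemma powerSum_monomial_mem (d : Fin r →₀ ℕ) :
    powerSum K n (MvPolynomial.monomial d (1 : K)) ∈ Algebra.adjoin K
      {t | ∃ d : Fin r →₀ ℕ, (d.sum fun _ e => e) ≤ n ∧
        t = powerSum K n (MvPolynomial.monomial d (1 : K))} := by
  suffices H : ∀ s : ℕ, ∀ d : Fin r →₀ ℕ, (d.sum fun _ x => x) ≤ s →
      powerSum K n (MvPolynomial.monomial d (1 : K)) ∈ Algebra.adjoin K
        {t | ∃ d : Fin r →₀ ℕ, (d.sum fun _ e => e) ≤ n ∧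
          t = powerSum K n (MvPolynomial.monomial d (1 : K))} by
    exact H _ d le_rfl
  intro s
  induction s using Nat.strong_induction_on with
  | _ s ih =>
    intro d hd
    by_cases hle : (d.sum fun _ x => x) ≤ n
    · exact Algebra.subset_adjoin ⟨d, hle, rfl⟩
    · push_neg at hle
      obtain ⟨e, he1, he2⟩ := exists_decomp n d (by omega)
      have hmem := powerSum_prod_mem K (n := n) (fun i => MvPolynomial.monomial (e i) (1 : K))
      rw [monomial_prod, he2] at hmem
      refine Algebra.adjoin_le ?_ hmem
      rintro t ⟨S, hSne, rfl⟩
      rw [monomial_prod]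
      have hi₁ : ∃ i₁, i₁ ∉ S := by
        by_contra h
        push_neg at h
        exact hSne (Finset.eq_univ_iff_forall.mpr h)
      obtain ⟨i₁, hi₁⟩ := hi₁
      have hsub : S ⊆ Finset.univ.erase i₁ := fun x hx =>
        Finset.mem_erase.mpr ⟨fun h => hi₁ (h ▸ hx), Finset.mem_univ x⟩
      have hbound : ∑ i ∈ S, ((e i).sum fun _ x => x) + 1 ≤ (d.sum fun _ x => x) := by
        have h1 : ∑ i ∈ S, ((e i).sum fun _ x => x)
            ≤ ∑ i ∈ Finset.univ.erase i₁, ((e i).sum fun _ x => x) :=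
          Finset.sum_le_sum_of_subset hsub
        have h2 : ((e i₁).sum fun _ x => x) + ∑ i ∈ Finset.univ.erase i₁, ((e i).sum fun _ x => x)
            = ∑ i : Fin (n + 1), ((e i).sum fun _ x => x) :=
          Finset.add_sum_erase _ (fun i => (e i).sum fun _ x => x) (Finset.mem_univ i₁)
        have h3 : (∑ i : Fin (n + 1), ((e i).sum fun _ x => x)) = (d.sum fun _ x => x) := by
          rw [← sum_sum_eq, he2]
        have h4 := he1 i₁
        omega
      have hdeg : ((∑ i ∈ S, e i).sum fun _ x => x) < s := by
        rw [sum_sum_eq]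
        omega
      exact ih _ hdeg _ le_rfl

lemma powerSum_mem_adjoin (m : MvPolynomial (Fin r) K) :
    powerSum K n m ∈ Algebra.adjoin K
      {t | ∃ d : Fin r →₀ ℕ, (d.sum fun _ e => e) ≤ n ∧
        t = powerSum K n (MvPolynomial.monomial d (1 : K))} := by
  have hzero : powerSum K n (0 : MvPolynomial (Fin r) K) = 0 := by
    rw [← zero_smul K (0 : MvPolynomial (Fin r) K), powerSum_smul, zero_smul]
  have hsum : ∀ (S : Finset (Fin r →₀ ℕ)) (f : (Fin r →₀ ℕ) → MvPolynomial (Fin r) K),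
      powerSum K n (∑ v ∈ S, f v) = ∑ v ∈ S, powerSum K n (f v) := by
    intro S f
    classical
    induction S using Finset.induction_on with
    | empty => simpa using hzero
    | insert _ _ h ih => rw [Finset.sum_insert h, powerSum_add, ih, Finset.sum_insert h]
  have hkey : powerSum K n m = ∑ v ∈ m.support,
      (MvPolynomial.coeff v m) • powerSum K n (MvPolynomial.monomial v (1 : K)) := by
    conv_lhs => rw [m.as_sum]
    rw [hsum]
    refine Finset.sum_congr rfl fun v _ => ?_
    rw [← powerSum_smul, MvPolynomial.smul_monomial, smul_eq_mul, mul_one]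
  rw [hkey]
  exact sum_mem fun v _ => Subalgebra.smul_mem _ (powerSum_monomial_mem K v) _

end Poly


/-- **Lemma 3.7.**  Let `K` be a field of characteristic zero and `F = K[T₁,…,T_r]`.  For
`n > 0`, the `K`-algebra `Γⁿ_K(F)`—identified via `αₙ` with the algebra `TSⁿ_K(F)` of
symmetric tensors, i.e. the tensors fixed by every permutation of the factors—is
generated by the elements `γ¹(m) * γ^{n-1}(1) = P(m)`, for monomials `m` of total degree
at most `n`.  Formulated elementwise: a tensor is symmetric if and only if it lies in the
`K`-subalgebra generated by these power sums. -/
theorem gamma_n_generated_by_small_power_sums (K : Type*) [Field K] [CharZero K]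
    (r : ℕ) {n : ℕ} (hn : 0 < n) (z : ⨂[K] (_ : Fin n), MvPolynomial (Fin r) K) :
    z ∈ Algebra.adjoin K
        {t | ∃ d : Fin r →₀ ℕ, (d.sum fun _ e => e) ≤ n ∧
          t = powerSum K n (MvPolynomial.monomial d 1)} ↔
      ∀ σ : Equiv.Perm (Fin n),
        PiTensorProduct.reindex K (fun _ : Fin n => MvPolynomial (Fin r) K) σ z = z := by
  constructor
  · intro hz
    refine Algebra.adjoin_le (S := symmAlg K (R := MvPolynomial (Fin r) K) (n := n)) ?_ hz
    rintro t ⟨d, -, rfl⟩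
    exact powerSum_mem_symmAlg K _
  · intro hsym
    have hsum_mem : ∀ w : ⨂[K] (_ : Fin n), MvPolynomial (Fin r) K,
        (∑ σ : Equiv.Perm (Fin n),
          PiTensorProduct.reindex K (fun _ : Fin n => MvPolynomial (Fin r) K) σ w) ∈
          Algebra.adjoin K
            {t | ∃ d : Fin r →₀ ℕ, (d.sum fun _ e => e) ≤ n ∧
              t = powerSum K n (MvPolynomial.monomial d 1)} := by
      intro w
      induction w using PiTensorProduct.induction_on with
      | smul_tprod c f =>
        simp only [map_smul, ← Finset.smul_sum]
        refine Subalgebra.smul_mem _ ?_ c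
        have he : (∑ σ : Equiv.Perm (Fin n),
            PiTensorProduct.reindex K (fun _ : Fin n => MvPolynomial (Fin r) K) σ (tprod K f))
            = esum K n n f := by
          rw [esum_univ]
          exact Finset.sum_congr rfl fun σ _ => reindex_tprod σ f
        rw [he]
        refine Algebra.adjoin_le ?_ (esum_mem K n f)
        rintro t ⟨S, rfl⟩
        exact powerSum_mem_adjoin K _
      | add x y hx hy =>
        simp only [map_add, Finset.sum_add_distrib]
        exact add_mem hx hy
    have hfac : ((n.factorial : K)) ≠ 0 := Nat.cast_ne_zero.mpr (Nat.factorial_ne_zero n)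
    have havg : (n.factorial : K) • z = ∑ σ : Equiv.Perm (Fin n),
        PiTensorProduct.reindex K (fun _ : Fin n => MvPolynomial (Fin r) K) σ z := by
      rw [Finset.sum_congr rfl fun σ _ => hsym σ, Finset.sum_const, Finset.card_univ,
        Fintype.card_perm, Fintype.card_fin, Nat.cast_smul_eq_nsmul]
    have hz : z = (n.factorial : K)⁻¹ • ((n.factorial : K) • z) := by
      rw [smul_smul, inv_mul_cancel₀ hfac, one_smul]
    rw [hz, havg]
    exact Subalgebra.smul_mem _ (hsum_mem z) _
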